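/- Assume {Y(0), Y(1)} ⊥ A | X and R ⊥ Y | (A, X), where Y = A·Y(1) + (1−A)·Y(0). Then the conditional average treatment effect τ(X) = E[Y(1) − Y(0) | X] equals E(Y | A=1, X, R=1_p) − E(Y | A=0, X, R=1_p), i.e., it is identified from complete cases, provided P(A=a, R=1_p | X) > 0 a.s. for a = 0,1. -/

import Mathlib

open MeasureTheory ProbabilityTheory

theorem condexp_sup_comap_of_condIndepFun
    {Ω β : Type*} {m' : MeasurableSpace Ω} [mΩ : MeasurableSpace Ω] [StandardBorelSpace Ω]
    {mβ : MeasurableSpace β}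
    {μ : Measure Ω} [IsProbabilityMeasure μ]
    (hm' : m' ≤ mΩ)
    {f : Ω → β} {Z : Ω → ℝ} (hf : Measurable f) (hZ : Measurable Z)
    (hZint : Integrable Z μ)
    (hind : CondIndepFun m' hm' f Z μ) :
    μ[Z | m' ⊔ MeasurableSpace.comap f mβ] =ᵐ[μ] μ[Z | m'] := by
  have hmf : MeasurableSpace.comap f mβ ≤ mΩ := hf.comap_le
  have hm₂ : m' ⊔ MeasurableSpace.comap f mβ ≤ mΩ := sup_le hm' hmf
  set M : Ω → ℝ := μ[Z | m'] with hMdef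
  set κ : Set β → Ω → ℝ :=
    fun t => μ[(f ⁻¹' t).indicator (fun _ => (1 : ℝ)) | m'] with hκdef
  have hκ_sm : ∀ t, StronglyMeasurable[m'] (κ t) := fun _ => stronglyMeasurable_condExp
  have hκ_int : ∀ t, Integrable (κ t) μ := fun _ => integrable_condExp
  have hκ0 : ∀ t, 0 ≤ᵐ[μ] κ t := fun t =>
    condExp_nonneg (Filter.Eventually.of_forall
      (Set.indicator_nonneg (fun _ _ => zero_le_one)))
  have hind_le_one : ∀ (t : Set β) (x : Ω),
      (f ⁻¹' t).indicator (fun _ => (1:ℝ)) x ≤ 1 := by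
    intro t x
    classical
    by_cases h : x ∈ f ⁻¹' t <;> simp [Set.indicator_apply, h]
  have hκ1 : ∀ t, MeasurableSet t → κ t ≤ᵐ[μ] fun _ => (1 : ℝ) := by
    intro t ht
    have h := condExp_mono (m := m') (μ := μ)
      ((integrable_const (1:ℝ)).indicator (hf ht))
      (integrable_const (1:ℝ))
      (Filter.Eventually.of_forall (hind_le_one t))
    rwa [condExp_const hm'] at h
  -- `κ t` is a.e. bounded in norm by 1
  have hκbd : ∀ t, MeasurableSet t → ∀ᵐ ω ∂μ, ‖κ t ω‖ ≤ 1 := by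
    intro t ht
    filter_upwards [hκ0 t, hκ1 t ht] with ω h0 h1
    rw [Real.norm_eq_abs, abs_of_nonneg h0]; exact h1
  -- Step 1: set-level identity
  have key1 : ∀ C, MeasurableSet[m'] C → ∀ t, MeasurableSet t → ∀ u, MeasurableSet u →
      (μ (C ∩ (f ⁻¹' t ∩ Z ⁻¹' u))).toReal = ∫ ω in C ∩ Z ⁻¹' u, κ t ω ∂μ := by
    intro C hC t ht u hu
    have hCm : MeasurableSet C := hm' _ hC
    have hfu : MeasurableSet (f ⁻¹' t ∩ Z ⁻¹' u) := (hf ht).inter (hZ hu)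
    have hprod := (condIndepFun_iff_condExp_inter_preimage_eq_mul (μ := μ)
      (hm' := hm') hf hZ).mp hind t u ht hu
    have l1 : (μ (C ∩ (f ⁻¹' t ∩ Z ⁻¹' u))).toReal
        = ∫ ω in C, (μ⟦f ⁻¹' t ∩ Z ⁻¹' u | m'⟧) ω ∂μ := by
      rw [setIntegral_condExp hm' ((integrable_const (1:ℝ)).indicator hfu) hC,
        setIntegral_indicator hfu, setIntegral_const, smul_eq_mul, mul_one,
        Set.inter_comm, measureReal_def]
    have l2 : ∫ ω in C, (μ⟦f ⁻¹' t ∩ Z ⁻¹' u | m'⟧) ω ∂μ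
        = ∫ ω in C, κ t ω * (μ⟦Z ⁻¹' u | m'⟧) ω ∂μ :=
      setIntegral_congr_ae hCm (hprod.mono fun ω h _ => h)
    -- right-hand side
    have hG : Integrable ((Z ⁻¹' u).indicator (fun _ => (1:ℝ))) μ :=
      (integrable_const (1:ℝ)).indicator (hZ hu)
    have hF_sm : StronglyMeasurable[m'] (C.indicator (κ t)) :=
      (hκ_sm t).indicator hC
    have hFG_int : Integrable
        (C.indicator (κ t) * (Z ⁻¹' u).indicator (fun _ => (1:ℝ))) μ := by
      refine Integrable.mono' (hκ_int t).abs
        ((hF_sm.mono hm').aestronglyMeasurable.mul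
          (hG.aestronglyMeasurable)) ?_
      filter_upwards with ω
      classical
      by_cases h1 : ω ∈ C <;> by_cases h2 : ω ∈ Z ⁻¹' u <;>
        simp [Set.indicator_apply, h1, h2, abs_nonneg]
    have r1 : ∫ ω in C ∩ Z ⁻¹' u, κ t ω ∂μ
        = ∫ ω, (C.indicator (κ t) * (Z ⁻¹' u).indicator (fun _ => (1:ℝ))) ω ∂μ := by
      rw [← integral_indicator (hCm.inter (hZ hu))]
      congr 1
      funext ω
      classical
      by_cases h1 : ω ∈ C <;> by_cases h2 : ω ∈ Z ⁻¹' u <;>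
        simp [Set.indicator_apply, h1, h2]
    have r2 : ∫ ω, (C.indicator (κ t) * (Z ⁻¹' u).indicator (fun _ => (1:ℝ))) ω ∂μ
        = ∫ ω, (C.indicator (κ t)) ω * (μ⟦Z ⁻¹' u | m'⟧) ω ∂μ := by
      rw [← integral_condExp hm' (f := C.indicator (κ t) * (Z ⁻¹' u).indicator (fun _ => (1:ℝ)))]
      exact integral_congr_ae (condExp_mul_of_stronglyMeasurable_left hF_sm hFG_int hG)
    have r3 : ∫ ω, (C.indicator (κ t)) ω * (μ⟦Z ⁻¹' u | m'⟧) ω ∂μ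
        = ∫ ω in C, κ t ω * (μ⟦Z ⁻¹' u | m'⟧) ω ∂μ := by
      rw [← integral_indicator hCm]
      congr 1
      funext ω
      classical
      by_cases h1 : ω ∈ C <;> simp [Set.indicator_apply, h1]
    rw [l1, l2, r1, r2, r3]
  -- Step 2: function-level identity for `Z`
  have key2 : ∀ C, MeasurableSet[m'] C → ∀ t, MeasurableSet t →
      ∫ ω in C ∩ f ⁻¹' t, Z ω ∂μ = ∫ ω in C, κ t ω * Z ω ∂μ := by
    intro C hC t ht
    have hCm : MeasurableSet C := hm' _ hC
    have hdens : Measurable fun ω => (κ t ω).toNNReal :=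
      ((hκ_sm t).mono hm').measurable.real_toNNReal
    have hmeq : Measure.map Z (μ.restrict (C ∩ f ⁻¹' t))
        = Measure.map Z ((μ.restrict C).withDensity fun ω => ENNReal.ofReal (κ t ω)) := by
      ext u hu
      rw [Measure.map_apply hZ hu, Measure.map_apply hZ hu,
        Measure.restrict_apply (hZ hu), withDensity_apply _ (hZ hu),
        Measure.restrict_restrict (hZ hu)]
      have e1 : Z ⁻¹' u ∩ (C ∩ f ⁻¹' t) = C ∩ (f ⁻¹' t ∩ Z ⁻¹' u) := by
        ext ω; simp only [Set.mem_inter_iff]; tauto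
      have e2 : Z ⁻¹' u ∩ C = C ∩ Z ⁻¹' u := Set.inter_comm _ _
      rw [e1, e2]
      have hint : IntegrableOn (κ t) (C ∩ Z ⁻¹' u) μ := (hκ_int t).integrableOn
      have h0 : 0 ≤ᵐ[μ.restrict (C ∩ Z ⁻¹' u)] κ t := ae_restrict_of_ae (hκ0 t)
      rw [← ofReal_integral_eq_lintegral_ofReal hint h0, ← key1 C hC t ht u hu,
        ENNReal.ofReal_toReal (measure_ne_top μ _)]
    calc ∫ ω in C ∩ f ⁻¹' t, Z ω ∂μ
        = ∫ y, y ∂(Measure.map Z (μ.restrict (C ∩ f ⁻¹' t))) :=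
          (integral_map hZ.aemeasurable aestronglyMeasurable_id).symm
      _ = ∫ y, y ∂(Measure.map Z
            ((μ.restrict C).withDensity fun ω => ENNReal.ofReal (κ t ω))) := by rw [hmeq]
      _ = ∫ ω, Z ω ∂((μ.restrict C).withDensity fun ω => ENNReal.ofReal (κ t ω)) :=
          integral_map hZ.aemeasurable aestronglyMeasurable_id
      _ = ∫ ω in C, (κ t ω).toNNReal • Z ω ∂μ := by
          rw [← integral_withDensity_eq_integral_smul hdens]
          rfl
      _ = ∫ ω in C, κ t ω * Z ω ∂μ := by
          refine integral_congr_ae (ae_restrict_of_ae ((hκ0 t).mono fun ω h0 => ?_))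
          simp [NNReal.smul_def, Real.coe_toNNReal _ h0]
  -- Step 3: function-level identity for `M`
  have key3 : ∀ C, MeasurableSet[m'] C → ∀ t, MeasurableSet t →
      ∫ ω in C ∩ f ⁻¹' t, M ω ∂μ = ∫ ω in C, κ t ω * M ω ∂μ := by
    intro C hC t ht
    have hCm : MeasurableSet C := hm' _ hC
    have hG : Integrable ((f ⁻¹' t).indicator (fun _ => (1:ℝ))) μ :=
      (integrable_const (1:ℝ)).indicator (hf ht)
    have hF_sm : StronglyMeasurable[m'] (C.indicator M) :=
      stronglyMeasurable_condExp.indicator hC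
    have hFG_int : Integrable
        (C.indicator M * (f ⁻¹' t).indicator (fun _ => (1:ℝ))) μ := by
      refine Integrable.mono' (integrable_condExp (μ := μ) (m := m') (f := Z)).abs
        ((hF_sm.mono hm').aestronglyMeasurable.mul hG.aestronglyMeasurable) ?_
      filter_upwards with ω
      classical
      by_cases h1 : ω ∈ C <;> by_cases h2 : ω ∈ f ⁻¹' t <;>
        simp [Set.indicator_apply, h1, h2, abs_nonneg, hMdef]
    calc ∫ ω in C ∩ f ⁻¹' t, M ω ∂μ
        = ∫ ω, (C.indicator M * (f ⁻¹' t).indicator (fun _ => (1:ℝ))) ω ∂μ := by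
          rw [← integral_indicator (hCm.inter (hf ht))]
          congr 1
          funext ω
          classical
          by_cases h1 : ω ∈ C <;> by_cases h2 : ω ∈ f ⁻¹' t <;>
            simp [Set.indicator_apply, h1, h2]
      _ = ∫ ω, (C.indicator M) ω * (κ t) ω ∂μ := by
          rw [← integral_condExp hm'
            (f := C.indicator M * (f ⁻¹' t).indicator (fun _ => (1:ℝ)))]
          exact integral_congr_ae (condExp_mul_of_stronglyMeasurable_left hF_sm hFG_int hG)
      _ = ∫ ω in C, κ t ω * M ω ∂μ := by
          rw [← integral_indicator hCm]
          congr 1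
          funext ω
          classical
          by_cases h1 : ω ∈ C <;> simp [Set.indicator_apply, h1, mul_comm]
  -- middle identity
  have key_mid : ∀ C, MeasurableSet[m'] C → ∀ t, MeasurableSet t →
      ∫ ω in C, κ t ω * Z ω ∂μ = ∫ ω in C, κ t ω * M ω ∂μ := by
    intro C hC t ht
    have hCm : MeasurableSet C := hm' _ hC
    have hF_sm : StronglyMeasurable[m'] (C.indicator (κ t)) := (hκ_sm t).indicator hC
    have hFZ_int : Integrable (C.indicator (κ t) * Z) μ := by
      refine Integrable.mono' hZint.abs
        ((hF_sm.mono hm').aestronglyMeasurable.mul hZint.aestronglyMeasurable) ?_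
      filter_upwards [hκ0 t, hκ1 t ht] with ω h0 h1
      classical
      by_cases h : ω ∈ C
      · simp only [Pi.mul_apply, Set.indicator_of_mem h, norm_mul, Real.norm_eq_abs]
        calc |κ t ω| * |Z ω| ≤ 1 * |Z ω| := by
              have : |κ t ω| ≤ 1 := by rw [abs_of_nonneg h0]; exact h1
              exact mul_le_mul_of_nonneg_right this (abs_nonneg _)
          _ = |Z ω| := one_mul _
      · simp [Set.indicator_of_notMem h, abs_nonneg]
    calc ∫ ω in C, κ t ω * Z ω ∂μ
        = ∫ ω, (C.indicator (κ t) * Z) ω ∂μ := by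
          rw [← integral_indicator hCm]
          congr 1
          funext ω
          classical
          by_cases h1 : ω ∈ C <;> simp [Set.indicator_apply, h1]
      _ = ∫ ω, (C.indicator (κ t)) ω * M ω ∂μ := by
          rw [← integral_condExp hm' (f := C.indicator (κ t) * Z)]
          exact integral_congr_ae (condExp_mul_of_stronglyMeasurable_left hF_sm hFZ_int hZint)
      _ = ∫ ω in C, κ t ω * M ω ∂μ := by
          rw [← integral_indicator hCm]
          congr 1
          funext ω
          classical
          by_cases h1 : ω ∈ C <;> simp [Set.indicator_apply, h1]
  -- the generating π-system of `m₂`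
  have h_eq : (m' ⊔ MeasurableSpace.comap f mβ) = MeasurableSpace.generateFrom
      {D | ∃ C, MeasurableSet[m'] C ∧ ∃ t, MeasurableSet t ∧ D = C ∩ f ⁻¹' t} := by
    refine le_antisymm (sup_le ?_ ?_) (MeasurableSpace.generateFrom_le ?_)
    · intro C hC
      exact MeasurableSpace.measurableSet_generateFrom
        ⟨C, hC, Set.univ, MeasurableSet.univ, by simp⟩
    · rintro D ⟨t, ht, rfl⟩
      exact MeasurableSpace.measurableSet_generateFrom
        ⟨Set.univ, MeasurableSet.univ, t, ht, by simp⟩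
    · rintro D ⟨C, hC, t, ht, rfl⟩
      exact ((le_sup_left : m' ≤ m' ⊔ MeasurableSpace.comap f mβ) _ hC).inter
        ((le_sup_right : MeasurableSpace.comap f mβ ≤ m' ⊔ MeasurableSpace.comap f mβ)
          _ ⟨t, ht, rfl⟩)
  have h_pi : IsPiSystem
      {D | ∃ C, MeasurableSet[m'] C ∧ ∃ t, MeasurableSet t ∧ D = C ∩ f ⁻¹' t} := by
    rintro _ ⟨C₁, hC₁, t₁, ht₁, rfl⟩ _ ⟨C₂, hC₂, t₂, ht₂, rfl⟩ _
    refine ⟨C₁ ∩ C₂, hC₁.inter hC₂, t₁ ∩ t₂, ht₁.inter ht₂, ?_⟩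
    rw [Set.preimage_inter]
    exact Set.inter_inter_inter_comm _ _ _ _
  -- all `m₂`-measurable sets give equal integrals
  have hint_all : ∀ D, MeasurableSet[m' ⊔ MeasurableSpace.comap f mβ] D →
      ∫ ω in D, Z ω ∂μ = ∫ ω in D, M ω ∂μ := by
    refine MeasurableSpace.induction_on_inter (m := m' ⊔ MeasurableSpace.comap f mβ)
      (C := fun D _ => ∫ ω in D, Z ω ∂μ = ∫ ω in D, M ω ∂μ) h_eq h_pi (by simp) ?_ ?_ ?_
    · rintro _ ⟨C, hC, t, ht, rfl⟩
      rw [key2 C hC t ht, key3 C hC t ht, key_mid C hC t ht]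
    · intro D hD hDeq
      have h1 := integral_add_compl (hm₂ _ hD) hZint
      have h2 := integral_add_compl (hm₂ _ hD) (integrable_condExp (μ := μ) (m := m') (f := Z))
      have h3 : ∫ ω, Z ω ∂μ = ∫ ω, M ω ∂μ := (integral_condExp hm').symm
      linarith
    · intro g hdisj hgm hgeq
      rw [integral_iUnion (fun i => hm₂ _ (hgm i)) hdisj hZint.integrableOn,
        integral_iUnion (fun i => hm₂ _ (hgm i)) hdisj
          (integrable_condExp (μ := μ) (m := m') (f := Z)).integrableOn]
      exact tsum_congr hgeq
  -- conclude by uniqueness of conditional expectation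
  exact (ae_eq_condExp_of_forall_setIntegral_eq hm₂ hZint
    (fun s _ _ => (integrable_condExp (μ := μ) (m := m') (f := Z)).integrableOn)
    (fun s hs _ => (hint_all s hs).symm)
    (((stronglyMeasurable_condExp (m := m') (μ := μ) (f := Z)).mono
      (le_sup_left (b := MeasurableSpace.comap f mβ))).aestronglyMeasurable (μ := μ))).symm

theorem arm_identification
    {Ω 𝒳 ℛ : Type*} [mΩ : MeasurableSpace Ω] [StandardBorelSpace Ω]
    [MeasurableSpace 𝒳] [MeasurableSpace ℛ] [MeasurableSingletonClass ℛ]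
    (μ : Measure Ω) [IsProbabilityMeasure μ]
    (A : Ω → Bool) (X : Ω → 𝒳) (R : Ω → ℛ)
    (hA : Measurable A) (hX : Measurable X) (hR : Measurable R)
    (Y Ya : Ω → ℝ) (hYm : Measurable Y) (hYam : Measurable Ya)
    (hYint : Integrable Y μ) (hYaint : Integrable Ya μ)
    (full : ℛ) (a : Bool) (hYa : ∀ ω, A ω = a → Y ω = Ya ω)
    (hunconfa : CondIndepFun (MeasurableSpace.comap X inferInstance) hX.comap_le A Ya μ)
    (hOIM : CondIndepFun (MeasurableSpace.comap (fun ω => (A ω, X ω)) inferInstance)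
      (Measurable.comap_le (hA.prodMk hX)) R Y μ)
    (pa : 𝒳 → ℝ) (hpam : Measurable pa)
    (hpa_ver : ∀ s : Set 𝒳, MeasurableSet s →
      (μ {ω | A ω = a ∧ R ω = full ∧ X ω ∈ s}).toReal = ∫ ω in X ⁻¹' s, pa (X ω) ∂μ)
    (hpa_pos : ∀ᵐ ω ∂μ, 0 < pa (X ω))
    (ga : 𝒳 → ℝ) (hgam : Measurable ga) (hgaint : Integrable (fun ω => ga (X ω)) μ)
    (hg : ∀ s : Set 𝒳, MeasurableSet s →
      ∫ ω in {ω | A ω = a ∧ R ω = full ∧ X ω ∈ s}, Y ω ∂μ =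
        ∫ ω in {ω | A ω = a ∧ R ω = full ∧ X ω ∈ s}, ga (X ω) ∂μ) :
    μ[Ya | MeasurableSpace.comap X inferInstance] =ᵐ[μ] fun ω => ga (X ω) := by
  classical
  have hmX : MeasurableSpace.comap X inferInstance ≤ mΩ := hX.comap_le
  have hmAX : MeasurableSpace.comap (fun ω => (A ω, X ω)) inferInstance ≤ mΩ :=
    (hA.prodMk hX).comap_le
  have hmR : MeasurableSpace.comap R inferInstance ≤ mΩ := hR.comap_le
  have hm₂ : MeasurableSpace.comap (fun ω => (A ω, X ω)) inferInstance
      ⊔ MeasurableSpace.comap R inferInstance ≤ mΩ := sup_le hmAX hmR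
  -- inclusions of σ-algebras
  have hmXle : MeasurableSpace.comap X inferInstance
      ≤ MeasurableSpace.comap (fun ω => (A ω, X ω)) inferInstance := by
    have e : MeasurableSpace.comap X inferInstance
        = (MeasurableSpace.comap Prod.snd inferInstance).comap
            (fun ω => (A ω, X ω)) :=
      (MeasurableSpace.comap_comp (f := Prod.snd) (g := fun ω => (A ω, X ω))).symm
    rw [e]
    exact MeasurableSpace.comap_mono (measurable_snd.comap_le)
  have hmAle : MeasurableSpace.comap A inferInstance
      ≤ MeasurableSpace.comap (fun ω => (A ω, X ω)) inferInstance := by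
    have e : MeasurableSpace.comap A inferInstance
        = (MeasurableSpace.comap Prod.fst inferInstance).comap
            (fun ω => (A ω, X ω)) :=
      (MeasurableSpace.comap_comp (f := Prod.fst) (g := fun ω => (A ω, X ω))).symm
    rw [e]
    exact MeasurableSpace.comap_mono (measurable_fst.comap_le)
  have hmAXeq : MeasurableSpace.comap X (inferInstance : MeasurableSpace 𝒳)
      ⊔ MeasurableSpace.comap A (inferInstance : MeasurableSpace Bool)
      = MeasurableSpace.comap (fun ω => (A ω, X ω)) inferInstance := by
    have h1 : (inferInstance : MeasurableSpace (Bool × 𝒳))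
        = MeasurableSpace.comap Prod.fst (inferInstance : MeasurableSpace Bool)
          ⊔ MeasurableSpace.comap Prod.snd (inferInstance : MeasurableSpace 𝒳) := rfl
    rw [h1, MeasurableSpace.comap_sup, MeasurableSpace.comap_comp,
      MeasurableSpace.comap_comp]
    exact sup_comm _ _
  -- basic measurable sets
  have hSa : MeasurableSet (A ⁻¹' {a} ∩ R ⁻¹' {full}) :=
    (hA (measurableSet_singleton a)).inter (hR (measurableSet_singleton full))
  have hSaAX : MeasurableSet[MeasurableSpace.comap (fun ω => (A ω, X ω)) inferInstance
      ⊔ MeasurableSpace.comap R inferInstance] (A ⁻¹' {a} ∩ R ⁻¹' {full}) := by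
    refine MeasurableSet.inter ?_ ?_
    · have h1 : MeasurableSpace.comap A inferInstance
          ≤ MeasurableSpace.comap (fun ω => (A ω, X ω)) inferInstance
            ⊔ MeasurableSpace.comap R inferInstance := hmAle.trans le_sup_left
      exact h1 _ ⟨{a}, measurableSet_singleton a, rfl⟩
    · have h1 : MeasurableSpace.comap R inferInstance
          ≤ MeasurableSpace.comap (fun ω => (A ω, X ω)) inferInstance
            ⊔ MeasurableSpace.comap R inferInstance := le_sup_right
      exact h1 _ ⟨{full}, measurableSet_singleton full, rfl⟩
  have hEeq : ∀ s : Set 𝒳, {ω | A ω = a ∧ R ω = full ∧ X ω ∈ s}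
      = X ⁻¹' s ∩ (A ⁻¹' {a} ∩ R ⁻¹' {full}) := by
    intro s
    ext ω
    simp only [Set.mem_setOf_eq, Set.mem_inter_iff, Set.mem_preimage,
      Set.mem_singleton_iff]
    tauto
  have hEm : ∀ s : Set 𝒳, MeasurableSet s →
      MeasurableSet {ω | A ω = a ∧ R ω = full ∧ X ω ∈ s} := by
    intro s hs
    rw [hEeq s]
    exact (hX hs).inter hSa
  have hEm₂ : ∀ s : Set 𝒳, MeasurableSet s →
      MeasurableSet[MeasurableSpace.comap (fun ω => (A ω, X ω)) inferInstance
        ⊔ MeasurableSpace.comap R inferInstance]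
        {ω | A ω = a ∧ R ω = full ∧ X ω ∈ s} := by
    intro s hs
    rw [hEeq s]
    have h1 : MeasurableSpace.comap X inferInstance
        ≤ MeasurableSpace.comap (fun ω => (A ω, X ω)) inferInstance
          ⊔ MeasurableSpace.comap R inferInstance := hmXle.trans le_sup_left
    exact MeasurableSet.inter (h1 _ ⟨s, hs, rfl⟩) hSaAX
  -- measurability of `X` w.r.t. the comap σ-algebra
  have hXmX : Measurable[MeasurableSpace.comap X inferInstance] X :=
    Measurable.of_comap_le le_rfl
  have hq_smX : StronglyMeasurable[MeasurableSpace.comap X inferInstance]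
      (fun ω => pa (X ω)) := (hpam.comp hXmX).stronglyMeasurable
  have hga_smX : StronglyMeasurable[MeasurableSpace.comap X inferInstance]
      (fun ω => ga (X ω)) := (hgam.comp hXmX).stronglyMeasurable
  have hqm : Measurable fun ω => pa (X ω) := hpam.comp hX
  have hq0 : ∀ᵐ ω ∂μ, 0 ≤ pa (X ω) := hpa_pos.mono fun ω h => h.le
  -- integrability of ω ↦ pa (X ω)
  have hqint : Integrable (fun ω => pa (X ω)) μ := by
    refine ⟨hqm.aestronglyMeasurable, ?_⟩
    have hsn : ∀ n : ℕ, MeasurableSet {x | pa x ≤ (n : ℝ)} :=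
      fun n => measurableSet_le hpam measurable_const
    have hbound : ∀ n : ℕ,
        ∫⁻ ω in X ⁻¹' {x | pa x ≤ (n : ℝ)}, ENNReal.ofReal (pa (X ω)) ∂μ ≤ 1 := by
      intro n
      have hion : IntegrableOn (fun ω => pa (X ω)) (X ⁻¹' {x | pa x ≤ (n : ℝ)}) μ := by
        refine Measure.integrableOn_of_bounded (M := (n : ℝ)) (measure_ne_top μ _)
          hqm.aestronglyMeasurable ?_
        filter_upwards [ae_restrict_mem (hX (hsn n)), ae_restrict_of_ae hq0] with ω hmem h0
        rw [Real.norm_eq_abs, abs_of_nonneg h0]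
        exact hmem
      rw [← ofReal_integral_eq_lintegral_ofReal hion (ae_restrict_of_ae hq0),
        ← hpa_ver _ (hsn n), ENNReal.ofReal_toReal (measure_ne_top μ _)]
      exact prob_le_one
    have hfin : ∫⁻ ω, ENNReal.ofReal (pa (X ω)) ∂μ ≤ 1 := by
      have hsup : ∀ ω, (⨆ n : ℕ, (X ⁻¹' {x | pa x ≤ (n : ℝ)}).indicator
          (fun ω => ENNReal.ofReal (pa (X ω))) ω) = ENNReal.ofReal (pa (X ω)) := by
        intro ω
        obtain ⟨n, hn⟩ := exists_nat_ge (pa (X ω))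
        refine le_antisymm (iSup_le fun m => Set.indicator_le_self _ _ ω) ?_
        refine le_iSup_of_le n ?_
        rw [Set.indicator_of_mem (show ω ∈ X ⁻¹' {x | pa x ≤ (n : ℝ)} from hn)]
      have hmono : Monotone (fun n : ℕ => (X ⁻¹' {x | pa x ≤ (n : ℝ)}).indicator
          (fun ω => ENNReal.ofReal (pa (X ω)))) := by
        intro n m hnm ω
        refine Set.indicator_le_indicator_of_subset
          (Set.preimage_mono fun x hx => ?_) (fun _ => zero_le) ω
        simp only [Set.mem_setOf_eq] at hx ⊢
        exact hx.trans (Nat.cast_le.mpr hnm)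
      have hmeas : ∀ n : ℕ, Measurable ((X ⁻¹' {x | pa x ≤ (n : ℝ)}).indicator
          (fun ω => ENNReal.ofReal (pa (X ω)))) :=
        fun n => (ENNReal.measurable_ofReal.comp hqm).indicator (hX (hsn n))
      calc ∫⁻ ω, ENNReal.ofReal (pa (X ω)) ∂μ
          = ∫⁻ ω, ⨆ n : ℕ, (X ⁻¹' {x | pa x ≤ (n : ℝ)}).indicator
              (fun ω => ENNReal.ofReal (pa (X ω))) ω ∂μ :=
            lintegral_congr fun ω => (hsup ω).symm
        _ = ⨆ n : ℕ, ∫⁻ ω, (X ⁻¹' {x | pa x ≤ (n : ℝ)}).indicator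
              (fun ω => ENNReal.ofReal (pa (X ω))) ω ∂μ := lintegral_iSup hmeas hmono
        _ ≤ 1 := by
            refine iSup_le fun n => ?_
            rw [lintegral_indicator (hX (hsn n))]
            exact hbound n
    rw [HasFiniteIntegral]
    calc ∫⁻ ω, ‖pa (X ω)‖₊ ∂μ = ∫⁻ ω, ENNReal.ofReal (pa (X ω)) ∂μ := by
          refine lintegral_congr_ae (hq0.mono fun ω h0 => ?_)
          exact Real.enorm_eq_ofReal h0
      _ ≤ 1 := hfin
      _ < ⊤ := ENNReal.one_lt_top
  -- the complete-case indicator W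
  have hWm : Measurable ((A ⁻¹' {a} ∩ R ⁻¹' {full}).indicator (fun _ => (1:ℝ))) :=
    (measurable_const.indicator hSa)
  have hWint : Integrable ((A ⁻¹' {a} ∩ R ⁻¹' {full}).indicator (fun _ => (1:ℝ))) μ :=
    (integrable_const (1:ℝ)).indicator hSa
  -- pa ∘ X is a version of the conditional expectation of W given X
  have hpW : (fun ω => pa (X ω)) =ᵐ[μ]
      μ[(A ⁻¹' {a} ∩ R ⁻¹' {full}).indicator (fun _ => (1:ℝ)) |
        MeasurableSpace.comap X inferInstance] := by
    refine ae_eq_condExp_of_forall_setIntegral_eq hmX hWint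
      (fun s _ _ => hqint.integrableOn) ?_ hq_smX.aestronglyMeasurable
    rintro _ ⟨s, hs, rfl⟩ _
    rw [← hpa_ver s hs, setIntegral_indicator hSa, setIntegral_const, smul_eq_mul,
      mul_one, ← hEeq s, measureReal_def]
  -- integrating a comap-X-measurable function against W or pa∘X gives the same
  have hWq : ∀ h : Ω → ℝ, StronglyMeasurable[MeasurableSpace.comap X inferInstance] h →
      Integrable h μ →
      Integrable (fun ω => h ω * pa (X ω)) μ ∧
      ∫ ω, h ω * (A ⁻¹' {a} ∩ R ⁻¹' {full}).indicator (fun _ => (1:ℝ)) ω ∂μ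
        = ∫ ω, h ω * pa (X ω) ∂μ := by
    intro h hsm hint
    have hhW : Integrable (h * (A ⁻¹' {a} ∩ R ⁻¹' {full}).indicator (fun _ => (1:ℝ))) μ := by
      refine Integrable.mono' hint.abs
        (((hsm.mono hmX).aestronglyMeasurable).mul hWm.aestronglyMeasurable) ?_
      filter_upwards with ω
      by_cases hmem : ω ∈ A ⁻¹' {a} ∩ R ⁻¹' {full} <;>
        simp [Set.indicator_apply, hmem, abs_nonneg]
    have hpull : μ[h * (A ⁻¹' {a} ∩ R ⁻¹' {full}).indicator (fun _ => (1:ℝ)) |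
          MeasurableSpace.comap X inferInstance] =ᵐ[μ]
        h * μ[(A ⁻¹' {a} ∩ R ⁻¹' {full}).indicator (fun _ => (1:ℝ)) |
          MeasurableSpace.comap X inferInstance] :=
      condExp_mul_of_stronglyMeasurable_left hsm hhW hWint
    have heq2 : (h * μ[(A ⁻¹' {a} ∩ R ⁻¹' {full}).indicator (fun _ => (1:ℝ)) |
          MeasurableSpace.comap X inferInstance]) =ᵐ[μ] fun ω => h ω * pa (X ω) :=
      Filter.EventuallyEq.mul Filter.EventuallyEq.rfl hpW.symm
    refine ⟨integrable_condExp.congr (hpull.trans heq2), ?_⟩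
    calc ∫ ω, h ω * (A ⁻¹' {a} ∩ R ⁻¹' {full}).indicator (fun _ => (1:ℝ)) ω ∂μ
        = ∫ ω, (h * (A ⁻¹' {a} ∩ R ⁻¹' {full}).indicator (fun _ => (1:ℝ))) ω ∂μ := rfl
      _ = ∫ ω, (μ[h * (A ⁻¹' {a} ∩ R ⁻¹' {full}).indicator (fun _ => (1:ℝ)) |
            MeasurableSpace.comap X inferInstance]) ω ∂μ :=
          (integral_condExp hmX (f := h * (A ⁻¹' {a} ∩ R ⁻¹' {full}).indicator
            (fun _ => (1:ℝ)))).symm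
      _ = ∫ ω, h ω * pa (X ω) ∂μ := integral_congr_ae (hpull.trans heq2)
  -- projections of conditional expectations
  have hprojR : μ[Y | MeasurableSpace.comap (fun ω => (A ω, X ω)) inferInstance
      ⊔ MeasurableSpace.comap R inferInstance] =ᵐ[μ]
      μ[Y | MeasurableSpace.comap (fun ω => (A ω, X ω)) inferInstance] :=
    condexp_sup_comap_of_condIndepFun hmAX hR hYm hYint hOIM
  have hprojA : μ[Ya | MeasurableSpace.comap (fun ω => (A ω, X ω)) inferInstance] =ᵐ[μ]
      μ[Ya | MeasurableSpace.comap X inferInstance] := by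
    rw [← hmAXeq]
    exact condexp_sup_comap_of_condIndepFun hmX hA hYam hYaint hunconfa
  -- replace Y by Ya behind the treatment indicator
  have hAa_mAX : MeasurableSet[MeasurableSpace.comap (fun ω => (A ω, X ω)) inferInstance]
      (A ⁻¹' {a}) := hmAle _ ⟨{a}, measurableSet_singleton a, rfl⟩
  have h1a_sm : StronglyMeasurable[MeasurableSpace.comap (fun ω => (A ω, X ω)) inferInstance]
      ((A ⁻¹' {a}).indicator (fun _ => (1:ℝ))) :=
    stronglyMeasurable_const.indicator hAa_mAX
  have h1aY_int : Integrable ((A ⁻¹' {a}).indicator (fun _ => (1:ℝ)) * Y) μ := by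
    refine Integrable.mono' hYint.abs
      (((h1a_sm.mono hmAX).aestronglyMeasurable).mul hYint.aestronglyMeasurable) ?_
    filter_upwards with ω
    by_cases h : ω ∈ A ⁻¹' {a} <;> simp [Set.indicator_apply, h, abs_nonneg]
  have h1aYa_int : Integrable ((A ⁻¹' {a}).indicator (fun _ => (1:ℝ)) * Ya) μ := by
    refine Integrable.mono' hYaint.abs
      (((h1a_sm.mono hmAX).aestronglyMeasurable).mul hYaint.aestronglyMeasurable) ?_
    filter_upwards with ω
    by_cases h : ω ∈ A ⁻¹' {a} <;> simp [Set.indicator_apply, h, abs_nonneg]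
  have hc2 : (A ⁻¹' {a}).indicator (fun _ => (1:ℝ)) * Y
      = (A ⁻¹' {a}).indicator (fun _ => (1:ℝ)) * Ya := by
    funext ω
    by_cases h : A ω = a
    · have hmem : ω ∈ A ⁻¹' {a} := by simp [h]
      simp [Set.indicator_of_mem hmem, hYa ω h]
    · have hmem : ω ∉ A ⁻¹' {a} := by simp [h]
      simp [Set.indicator_of_notMem hmem]
  have haind : ((A ⁻¹' {a}).indicator (fun _ => (1:ℝ))
        * μ[Y | MeasurableSpace.comap (fun ω => (A ω, X ω)) inferInstance]) =ᵐ[μ]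
      ((A ⁻¹' {a}).indicator (fun _ => (1:ℝ))
        * μ[Ya | MeasurableSpace.comap X inferInstance]) :=
    calc ((A ⁻¹' {a}).indicator (fun _ => (1:ℝ))
          * μ[Y | MeasurableSpace.comap (fun ω => (A ω, X ω)) inferInstance])
        =ᵐ[μ] μ[(A ⁻¹' {a}).indicator (fun _ => (1:ℝ)) * Y |
            MeasurableSpace.comap (fun ω => (A ω, X ω)) inferInstance] :=
          (condExp_mul_of_stronglyMeasurable_left h1a_sm h1aY_int hYint).symm
      _ = μ[(A ⁻¹' {a}).indicator (fun _ => (1:ℝ)) * Ya |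
            MeasurableSpace.comap (fun ω => (A ω, X ω)) inferInstance] := by rw [hc2]
      _ =ᵐ[μ] ((A ⁻¹' {a}).indicator (fun _ => (1:ℝ))
          * μ[Ya | MeasurableSpace.comap (fun ω => (A ω, X ω)) inferInstance]) :=
          condExp_mul_of_stronglyMeasurable_left h1a_sm h1aYa_int hYaint
      _ =ᵐ[μ] ((A ⁻¹' {a}).indicator (fun _ => (1:ℝ))
          * μ[Ya | MeasurableSpace.comap X inferInstance]) :=
          Filter.EventuallyEq.mul Filter.EventuallyEq.rfl hprojA
  -- main computation for Y
  have hchainY : ∀ s : Set 𝒳, MeasurableSet s →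
      ∫ ω in {ω | A ω = a ∧ R ω = full ∧ X ω ∈ s}, Y ω ∂μ
        = ∫ ω in X ⁻¹' s,
            (μ[Ya | MeasurableSpace.comap X inferInstance]) ω * pa (X ω) ∂μ := by
    intro s hs
    have hEs₂ := hEm₂ s hs
    have hEsm := hEm s hs
    have hXs_mX : MeasurableSet[MeasurableSpace.comap X inferInstance] (X ⁻¹' s) :=
      ⟨s, hs, rfl⟩
    have hsm4 : StronglyMeasurable[MeasurableSpace.comap X inferInstance]
        ((X ⁻¹' s).indicator (fun _ => (1:ℝ))
          * μ[Ya | MeasurableSpace.comap X inferInstance]) :=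
      (stronglyMeasurable_const.indicator hXs_mX).mul stronglyMeasurable_condExp
    have hint4 : Integrable ((X ⁻¹' s).indicator (fun _ => (1:ℝ))
        * μ[Ya | MeasurableSpace.comap X inferInstance]) μ := by
      refine Integrable.mono' (integrable_condExp (μ := μ)
          (m := MeasurableSpace.comap X inferInstance) (f := Ya)).abs
        ((hsm4.mono hmX).aestronglyMeasurable) ?_
      filter_upwards with ω
      by_cases h : ω ∈ X ⁻¹' s <;> simp [Set.indicator_apply, h, abs_nonneg]
    obtain ⟨hint5, heq5⟩ := hWq _ hsm4 hint4
    calc ∫ ω in {ω | A ω = a ∧ R ω = full ∧ X ω ∈ s}, Y ω ∂μ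
        = ∫ ω in {ω | A ω = a ∧ R ω = full ∧ X ω ∈ s},
            (μ[Y | MeasurableSpace.comap (fun ω => (A ω, X ω)) inferInstance
              ⊔ MeasurableSpace.comap R inferInstance]) ω ∂μ :=
          (setIntegral_condExp hm₂ hYint hEs₂).symm
      _ = ∫ ω in {ω | A ω = a ∧ R ω = full ∧ X ω ∈ s},
            (μ[Y | MeasurableSpace.comap (fun ω => (A ω, X ω)) inferInstance]) ω ∂μ :=
          setIntegral_congr_ae hEsm (hprojR.mono fun ω hω _ => hω)
      _ = ∫ ω in {ω | A ω = a ∧ R ω = full ∧ X ω ∈ s},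
            (μ[Ya | MeasurableSpace.comap X inferInstance]) ω ∂μ := by
          refine setIntegral_congr_ae hEsm (haind.mono fun ω hω hmem => ?_)
          have hAa : A ω = a := hmem.1
          have hmem' : ω ∈ A ⁻¹' {a} := by simp [hAa]
          simpa [Set.indicator_of_mem hmem'] using hω
      _ = ∫ ω, ((X ⁻¹' s).indicator (fun _ => (1:ℝ))
            * μ[Ya | MeasurableSpace.comap X inferInstance]) ω
            * (A ⁻¹' {a} ∩ R ⁻¹' {full}).indicator (fun _ => (1:ℝ)) ω ∂μ := by
          rw [← integral_indicator hEsm]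
          congr 1
          funext ω
          by_cases h1 : A ω = a <;> by_cases h2 : R ω = full <;> by_cases h3 : X ω ∈ s <;>
            simp [Set.indicator_apply, Set.mem_setOf_eq, h1, h2, h3]
      _ = ∫ ω, ((X ⁻¹' s).indicator (fun _ => (1:ℝ))
            * μ[Ya | MeasurableSpace.comap X inferInstance]) ω * pa (X ω) ∂μ := heq5
      _ = ∫ ω in X ⁻¹' s,
            (μ[Ya | MeasurableSpace.comap X inferInstance]) ω * pa (X ω) ∂μ := by
          rw [← integral_indicator (hX hs)]
          congr 1
          funext ω
          by_cases h : ω ∈ X ⁻¹' s <;> simp [Set.indicator_apply, h]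
  -- main computation for ga
  have hchainG : ∀ s : Set 𝒳, MeasurableSet s →
      ∫ ω in {ω | A ω = a ∧ R ω = full ∧ X ω ∈ s}, ga (X ω) ∂μ
        = ∫ ω in X ⁻¹' s, ga (X ω) * pa (X ω) ∂μ := by
    intro s hs
    have hEsm := hEm s hs
    have hXs_mX : MeasurableSet[MeasurableSpace.comap X inferInstance] (X ⁻¹' s) :=
      ⟨s, hs, rfl⟩
    have hsm4 : StronglyMeasurable[MeasurableSpace.comap X inferInstance]
        ((X ⁻¹' s).indicator (fun _ => (1:ℝ)) * fun ω => ga (X ω)) :=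
      (stronglyMeasurable_const.indicator hXs_mX).mul hga_smX
    have hint4 : Integrable ((X ⁻¹' s).indicator (fun _ => (1:ℝ))
        * fun ω => ga (X ω)) μ := by
      refine Integrable.mono' hgaint.abs
        ((hsm4.mono hmX).aestronglyMeasurable) ?_
      filter_upwards with ω
      by_cases h : ω ∈ X ⁻¹' s <;> simp [Set.indicator_apply, h, abs_nonneg]
    obtain ⟨hint5, heq5⟩ := hWq _ hsm4 hint4
    calc ∫ ω in {ω | A ω = a ∧ R ω = full ∧ X ω ∈ s}, ga (X ω) ∂μ
        = ∫ ω, ((X ⁻¹' s).indicator (fun _ => (1:ℝ)) * fun ω => ga (X ω)) ω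
            * (A ⁻¹' {a} ∩ R ⁻¹' {full}).indicator (fun _ => (1:ℝ)) ω ∂μ := by
          rw [← integral_indicator hEsm]
          congr 1
          funext ω
          by_cases h1 : A ω = a <;> by_cases h2 : R ω = full <;> by_cases h3 : X ω ∈ s <;>
            simp [Set.indicator_apply, Set.mem_setOf_eq, h1, h2, h3]
      _ = ∫ ω, ((X ⁻¹' s).indicator (fun _ => (1:ℝ)) * fun ω => ga (X ω)) ω
            * pa (X ω) ∂μ := heq5
      _ = ∫ ω in X ⁻¹' s, ga (X ω) * pa (X ω) ∂μ := by
          rw [← integral_indicator (hX hs)]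
          congr 1
          funext ω
          by_cases h : ω ∈ X ⁻¹' s <;> simp [Set.indicator_apply, h]
  -- uniqueness: m1 ⬝ q = ga∘X ⬝ q a.e.
  have hFint : Integrable (fun ω =>
      (μ[Ya | MeasurableSpace.comap X inferInstance]) ω * pa (X ω)) μ :=
    (hWq _ stronglyMeasurable_condExp integrable_condExp).1
  have hGint : Integrable (fun ω => ga (X ω) * pa (X ω)) μ :=
    (hWq _ hga_smX hgaint).1
  have hFG : (fun ω => (μ[Ya | MeasurableSpace.comap X inferInstance]) ω * pa (X ω))
      =ᵐ[μ] fun ω => ga (X ω) * pa (X ω) := by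
    refine ae_eq_of_forall_setIntegral_eq_of_sigmaFinite' hmX
      (fun s _ _ => hFint.integrableOn) (fun s _ _ => hGint.integrableOn) ?_
      (stronglyMeasurable_condExp.mul hq_smX).aestronglyMeasurable
      (hga_smX.mul hq_smX).aestronglyMeasurable
    rintro _ ⟨s, hs, rfl⟩ _
    rw [← hchainY s hs, ← hchainG s hs]
    exact hg s hs
  -- divide by the positive weight
  filter_upwards [hFG, hpa_pos] with ω hω hpos
  exact mul_right_cancel₀ (ne_of_gt hpos) hω


/-- under unconfoundedness `(Y(0),Y(1)) ⊥ A | X`, outcome-independent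
missingness `R ⊥ Y | (A, X)`, and positivity `P(A=a, R=1_p | X) > 0` a.s., the
conditional average treatment effect `τ(X) = E[Y(1) − Y(0) | X]` equals the
complete-case contrast `E(Y | A=1, X, R=1_p) − E(Y | A=0, X, R=1_p)`. -/
theorem cate_complete_case_identification
    {Ω 𝒳 ℛ : Type*} [MeasurableSpace Ω] [StandardBorelSpace Ω]
    [MeasurableSpace 𝒳] [MeasurableSpace ℛ] [MeasurableSingletonClass ℛ]
    (μ : Measure Ω) [IsProbabilityMeasure μ]
    (A : Ω → Bool) (X : Ω → 𝒳) (R : Ω → ℛ) (Y0 Y1 : Ω → ℝ)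
    (hA : Measurable A) (hX : Measurable X) (hR : Measurable R)
    (hY0 : Measurable Y0) (hY1 : Measurable Y1)
    (hint0 : Integrable Y0 μ) (hint1 : Integrable Y1 μ)
    (Y : Ω → ℝ) (hY : Y = fun ω => if A ω then Y1 ω else Y0 ω)
    (full : ℛ)
    -- unconfoundedness: (Y(0), Y(1)) ⊥ A | X
    (hunconf : CondIndepFun (MeasurableSpace.comap X inferInstance) hX.comap_le
      (fun ω => (Y0 ω, Y1 ω)) A μ)
    -- outcome-independent missingness: R ⊥ Y | (A, X)
    (hOIM : CondIndepFun
      (MeasurableSpace.comap (fun ω => (A ω, X ω)) inferInstance)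
      (Measurable.comap_le (hA.prodMk hX)) R Y μ)
    -- positivity: P(A=a, R=1_p | X) > 0 a.s., via versions p a of these probabilities
    (p : Bool → 𝒳 → ℝ) (hpm : ∀ a, Measurable (p a))
    (hp_ver : ∀ a : Bool, ∀ s : Set 𝒳, MeasurableSet s →
      (μ {ω | A ω = a ∧ R ω = full ∧ X ω ∈ s}).toReal =
        ∫ ω in X ⁻¹' s, p a (X ω) ∂μ)
    (hp_pos : ∀ a : Bool, ∀ᵐ ω ∂μ, 0 < p a (X ω))
    -- τX is a version of E[Y(1) − Y(0) | X]
    (τX : 𝒳 → ℝ) (hτXm : Measurable τX)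
    (hτX_int : Integrable (fun ω => τX (X ω)) μ)
    (hτX_ver : ∀ s : Set 𝒳, MeasurableSet s →
      ∫ ω in X ⁻¹' s, (Y1 ω - Y0 ω) ∂μ = ∫ ω in X ⁻¹' s, τX (X ω) ∂μ)
    -- g a is a version of E(Y | A=a, X, R=1_p), as a function of X
    (g1 g0 : 𝒳 → ℝ) (hg1m : Measurable g1) (hg0m : Measurable g0)
    (hg1int : Integrable (fun ω => g1 (X ω)) μ)
    (hg0int : Integrable (fun ω => g0 (X ω)) μ)
    (hg1 : ∀ s : Set 𝒳, MeasurableSet s →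
      ∫ ω in {ω | A ω = true ∧ R ω = full ∧ X ω ∈ s}, Y ω ∂μ =
        ∫ ω in {ω | A ω = true ∧ R ω = full ∧ X ω ∈ s}, g1 (X ω) ∂μ)
    (hg0 : ∀ s : Set 𝒳, MeasurableSet s →
      ∫ ω in {ω | A ω = false ∧ R ω = full ∧ X ω ∈ s}, Y ω ∂μ =
        ∫ ω in {ω | A ω = false ∧ R ω = full ∧ X ω ∈ s}, g0 (X ω) ∂μ) :
    τX =ᵐ[μ.map X] fun x => g1 x - g0 x := by
  classical
  have hYm : Measurable Y := by
    rw [hY]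
    exact Measurable.ite (hA (measurableSet_singleton true)) hY1 hY0
  have hYint : Integrable Y μ := by
    refine Integrable.mono' (hint1.abs.add hint0.abs) hYm.aestronglyMeasurable ?_
    filter_upwards with ω
    rw [hY]
    by_cases h : A ω <;>
      simp [h, abs_nonneg, Real.norm_eq_abs, le_add_of_nonneg_right,
        le_add_of_nonneg_left]
  have hindep1 : CondIndepFun (MeasurableSpace.comap X inferInstance) hX.comap_le
      A Y1 μ :=
    ProbabilityTheory.Kernel.IndepFun.symm
      (hunconf.comp measurable_snd measurable_id)
  have hindep0 : CondIndepFun (MeasurableSpace.comap X inferInstance) hX.comap_le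
      A Y0 μ :=
    ProbabilityTheory.Kernel.IndepFun.symm
      (hunconf.comp measurable_fst measurable_id)
  have hYa1 : ∀ ω, A ω = true → Y ω = Y1 ω := by
    intro ω h; rw [hY]; simp [h]
  have hYa0 : ∀ ω, A ω = false → Y ω = Y0 ω := by
    intro ω h; rw [hY]; simp [h]
  have harm1 := arm_identification μ A X R hA hX hR Y Y1 hYm hY1 hYint hint1
    full true hYa1 hindep1 hOIM (p true) (hpm true) (hp_ver true) (hp_pos true)
    g1 hg1m hg1int hg1
  have harm0 := arm_identification μ A X R hA hX hR Y Y0 hYm hY0 hYint hint0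
    full false hYa0 hindep0 hOIM (p false) (hpm false) (hp_ver false) (hp_pos false)
    g0 hg0m hg0int hg0
  have hτ : (fun ω => τX (X ω)) =ᵐ[μ]
      μ[fun ω => Y1 ω - Y0 ω | MeasurableSpace.comap X inferInstance] :=
    ae_eq_condExp_of_forall_setIntegral_eq hX.comap_le (hint1.sub hint0)
      (fun s _ _ => hτX_int.integrableOn)
      (by rintro _ ⟨s, hs, rfl⟩ _; exact (hτX_ver s hs).symm)
      ((hτXm.comp (Measurable.of_comap_le le_rfl)).stronglyMeasurable.aestronglyMeasurable)
  have hsub : μ[fun ω => Y1 ω - Y0 ω | MeasurableSpace.comap X inferInstance] =ᵐ[μ]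
      μ[Y1 | MeasurableSpace.comap X inferInstance]
        - μ[Y0 | MeasurableSpace.comap X inferInstance] :=
    condExp_sub hint1 hint0 _
  have hae : ∀ᵐ ω ∂μ, τX (X ω) = g1 (X ω) - g0 (X ω) := by
    filter_upwards [hτ, hsub, harm1, harm0] with ω h1 h2 h3 h4
    rw [h1, h2, Pi.sub_apply, h3, h4]
  have hset : MeasurableSet {x | τX x = g1 x - g0 x} :=
    measurableSet_eq_fun hτXm (hg1m.sub hg0m)
  exact (MeasureTheory.ae_map_iff hX.aemeasurable hset).mpr hae
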